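/- If n+1 ≡ 2 (mod 4), then f_0(n) ≥ √(n+1)/(2·cos(π/(2(n+1)))). -/

import Mathlib

open Real Matrix

section Aux

private lemma sum_cos_zero' (N : ℕ) (hN : 0 < N) (t : ℤ) (ht : ¬ ((N:ℤ) ∣ t)) (φ : ℝ) :
    ∑ k ∈ Finset.range N, Real.cos (2 * π * t * k / N + φ) = 0 := by
  have hNC : (N:ℂ) ≠ 0 := Nat.cast_ne_zero.mpr hN.ne'
  have h2pi : (2 * (π:ℂ) * Complex.I) ≠ 0 := by
    simp [Real.pi_ne_zero, Complex.I_ne_zero, Complex.ofReal_ne_zero]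
  set z : ℂ := Complex.exp (2 * π * Complex.I * t / N) with hz
  have hz1 : z ≠ 1 := by
    intro h
    obtain ⟨m, hm⟩ := Complex.exp_eq_one_iff.mp h
    apply ht ⟨m, ?_⟩
    have h : (t : ℂ) = (m : ℂ) * N := by
      apply mul_left_cancel₀ h2pi
      rw [div_eq_iff hNC] at hm
      linear_combination hm
    rw [mul_comm]; exact_mod_cast h
  have hzN : z ^ N = 1 := by
    rw [hz, ← Complex.exp_nat_mul]
    have : (N:ℂ) * (2 * π * Complex.I * t / N) = (t:ℂ) * (2 * π * Complex.I) := by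
      field_simp
    rw [this, Complex.exp_int_mul_two_pi_mul_I]
  have hgeom : ∑ k ∈ Finset.range N, z ^ k = 0 := by
    rw [geom_sum_eq hz1, hzN]; simp
  have key : ∀ k : ℕ, Complex.exp ((2 * π * t * k / N + φ : ℝ) * Complex.I)
      = Complex.exp ((φ:ℝ) * Complex.I) * z ^ k := by
    intro k
    rw [hz, ← Complex.exp_nat_mul, ← Complex.exp_add]
    congr 1
    push_cast
    field_simp
    ring
  calc ∑ k ∈ Finset.range N, Real.cos (2 * π * t * k / N + φ)
      = (∑ k ∈ Finset.range N, Complex.exp ((2 * π * t * k / N + φ : ℝ) * Complex.I)).re := by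
        rw [Complex.re_sum]
        exact Finset.sum_congr rfl fun k _ => (Complex.exp_ofReal_mul_I_re _).symm
    _ = (Complex.exp ((φ:ℝ) * Complex.I) * ∑ k ∈ Finset.range N, z ^ k).re := by
        rw [Finset.mul_sum]
        exact congrArg _ (Finset.sum_congr rfl fun k _ => key k)
    _ = 0 := by rw [hgeom, mul_zero, Complex.zero_re]

private lemma S1' (n : ℕ) (t : ℤ) (ht : ¬ (((n:ℤ)+1) ∣ t)) (φ : ℝ) :
    ∑ k : Fin n, Real.cos (2 * π * t * (k+1) / (n+1) + φ) = -Real.cos φ := by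
  have h0 := sum_cos_zero' (n+1) (Nat.succ_pos n) t (by exact_mod_cast ht) φ
  rw [Finset.sum_range_succ'] at h0
  push_cast at h0
  have h00 : Real.cos (2 * π * (t:ℝ) * 0 / ((n:ℝ)+1) + φ) = Real.cos φ := by norm_num
  rw [h00] at h0
  have h1 : ∑ k : Fin n, Real.cos (2 * π * t * (k+1) / (n+1) + φ)
      = ∑ k ∈ Finset.range n, Real.cos (2 * π * t * ((k:ℝ)+1) / ((n:ℝ)+1) + φ) :=
    Fin.sum_univ_eq_sum_range (fun k => Real.cos (2 * π * t * ((k:ℝ)+1) / ((n:ℝ)+1) + φ)) n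
  rw [h1]
  linarith

private lemma S2' (n : ℕ) (t : ℤ) :
    ∑ k : Fin n, Real.cos (2 * π * t * (k+1) / (n+1) + π/2) = 0 := by
  by_cases h : ((n:ℤ)+1) ∣ t
  · obtain ⟨m, hm⟩ := h
    apply Finset.sum_eq_zero; intro k _
    have he : 2 * π * (t:ℝ) * (k+1) / (n+1) + π/2 = π/2 + (m*((k:ℤ)+1) : ℤ) * (2*π) := by
      rw [hm]; push_cast
      have hne : ((n:ℝ)+1) ≠ 0 := by positivity
      field_simp
      ring
    rw [he, Real.cos_add_int_mul_two_pi, Real.cos_pi_div_two]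
  · rw [S1' n t h, Real.cos_pi_div_two, neg_zero]

private lemma not_dvd_helper' (n : ℕ) (t : ℤ) (h1 : t ≠ 0) (h2 : t.natAbs ≤ n) :
    ¬ ((n:ℤ)+1) ∣ t := by
  intro hd
  have hd1 : ((n+1:ℕ):ℤ) ∣ t := by exact_mod_cast hd
  have hd' : (n+1 : ℕ) ∣ t.natAbs := Int.natCast_dvd.mp hd1
  have := Nat.le_of_dvd (Int.natAbs_pos.mpr h1) hd'
  omega

private lemma S0' (n : ℕ) (t : ℤ) (ht : ¬ (((n:ℤ)+1) ∣ t)) :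
    ∑ k : Fin n, Real.cos (2 * π * t * (k+1) / (n+1)) = -1 := by
  have := S1' n t ht 0
  simpa using this

private lemma dist_sum' (n : ℕ) (i j : Fin (n+1)) (hij : i ≠ j) :
    ∑ k : Fin n, (Real.cos (2*π*(i:ℕ)*(k+1)/(n+1) + π/4)
      - Real.cos (2*π*(j:ℕ)*(k+1)/(n+1) + π/4))^2 = n + 1 := by
  have key : ∀ k : Fin n,
      (Real.cos (2*π*(i:ℕ)*(k+1)/(n+1) + π/4) - Real.cos (2*π*(j:ℕ)*(k+1)/(n+1) + π/4))^2
      = 1 + (1/2) * Real.cos (2*π*((2*(i:ℕ) : ℤ))*(k+1)/(n+1) + π/2)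
          + (1/2) * Real.cos (2*π*((2*(j:ℕ) : ℤ))*(k+1)/(n+1) + π/2)
          - Real.cos (2*π*(((i:ℕ) - (j:ℕ) : ℤ))*(k+1)/(n+1))
          - Real.cos (2*π*(((i:ℕ) + (j:ℕ) : ℤ))*(k+1)/(n+1) + π/2) := by
    intro k
    set X : ℝ := 2*π*(i:ℕ)*(k+1)/(n+1) + π/4 with hX
    set Y : ℝ := 2*π*(j:ℕ)*(k+1)/(n+1) + π/4 with hY
    have hne : ((n:ℝ)+1) ≠ 0 := by positivity
    have eA : 2*π*(((2*(i:ℕ) : ℤ)):ℝ)*(k+1)/(n+1) + π/2 = 2 * X := by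
      rw [hX]; push_cast; field_simp; ring
    have eB : 2*π*(((2*(j:ℕ) : ℤ)):ℝ)*(k+1)/(n+1) + π/2 = 2 * Y := by
      rw [hY]; push_cast; field_simp; ring
    have eD : 2*π*((((i:ℕ) - (j:ℕ) : ℤ)):ℝ)*(k+1)/(n+1) = X - Y := by
      rw [hX, hY]; push_cast; field_simp; ring
    have eS : 2*π*((((i:ℕ) + (j:ℕ) : ℤ)):ℝ)*(k+1)/(n+1) + π/2 = X + Y := by
      rw [hX, hY]; push_cast; field_simp; ring
    rw [eA, eB, eD, eS]
    linear_combination Real.cos_sq X + Real.cos_sq Y + Real.cos_add X Y + Real.cos_sub X Y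
  rw [Finset.sum_congr rfl (fun k _ => key k)]
  simp only [Finset.sum_add_distrib, Finset.sum_sub_distrib, ← Finset.mul_sum]
  rw [S2' n (2*(i:ℕ)), S2' n (2*(j:ℕ)), S2' n ((i:ℕ) + (j:ℕ))]
  rw [S0' n ((i:ℕ) - (j:ℕ)) (not_dvd_helper' n _ (by
      have h1 := i.isLt; have h2 := j.isLt
      have h3 : (i:ℕ) ≠ (j:ℕ) := fun h => hij (Fin.ext h)
      omega)
    (by have h1 := i.isLt; have h2 := j.isLt; omega))]
  simp [Finset.card_univ]

private lemma coord_bound' (N : ℕ) (hN : N % 4 = 2) (j m : ℕ) :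
    |Real.cos (2*π*j*m/N + π/4)| ≤ Real.cos (π/(2*N)) := by
  have hN2 : 2 ≤ N := by omega
  have hNR : (0:ℝ) < N := by exact_mod_cast (by omega : 0 < N)
  set M : ℕ := 8*j*m + N with hMdef
  have hM8 : M = 8*(j*m) + N := by rw [hMdef]; ring
  have hang : 2*π*(j:ℝ)*m/N + π/4 = π * M / (4*N) := by
    rw [hMdef]; push_cast; field_simp; ring
  rw [hang]
  set q := M / (4*N) with hq
  set r := M % (4*N) with hrdef
  have hM : 4*N*q + r = M := Nat.div_add_mod M (4*N)
  have hM' : 4*(N*q) + r = M := by rw [← hM]; ring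
  have hrlt : r < 4*N := Nat.mod_lt _ (by omega)
  have hrmod : r % 4 = 2 := by omega
  have hr2 : 2 ≤ r := by omega
  have hr2' : r ≤ 4*N - 2 := by omega
  have hsplit : π * M / (4*N) = π * r / (4*N) + q * π := by
    rw [← hM]; push_cast; field_simp; ring
  rw [hsplit]
  set x : ℝ := π * r / (4*N) with hxdef
  have habs : |Real.cos (x + q*π)| = |Real.cos x| := by
    rcases Nat.even_or_odd q with ⟨a, ha⟩ | ⟨a, ha⟩
    · have he : x + (q:ℝ)*π = x + (a:ℤ) * (2*π) := by rw [ha]; push_cast; ring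
      rw [he, Real.cos_add_int_mul_two_pi]
    · have he : x + (q:ℝ)*π = (x + π) + (a:ℤ) * (2*π) := by rw [ha]; push_cast; ring
      rw [he, Real.cos_add_int_mul_two_pi, Real.cos_add_pi, abs_neg]
  rw [habs]
  have hrR2 : (2:ℝ) ≤ r := by exact_mod_cast hr2
  have hrRhi : (r:ℝ) ≤ 4*N - 2 := by
    have : (r:ℝ) + 2 ≤ 4*N := by exact_mod_cast (by omega : r + 2 ≤ 4*N)
    linarith
  have hxlo : π/(2*N) ≤ x := by
    rw [hxdef]
    have he : π/(2*N) = π*2/(4*N) := by field_simp; ring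
    rw [he]
    gcongr
  have hxhi : x ≤ π - π/(2*N) := by
    rw [hxdef]
    have he : π - π/(2*N) = π*(4*N-2)/(4*N) := by field_simp; ring
    rw [he]
    gcongr
  have hx0 : 0 ≤ x := by rw [hxdef]; positivity
  have hαpos : 0 < π/(2*N) := by positivity
  have hxpi : x ≤ π := by linarith
  apply abs_le.mpr
  constructor
  · have h := Real.cos_le_cos_of_nonneg_of_le_pi hx0
      (by linarith [Real.pi_pos] : π - π/(2*N) ≤ π) hxhi
    rw [Real.cos_pi_sub] at h
    linarith
  · exact Real.cos_le_cos_of_nonneg_of_le_pi (le_of_lt hαpos) hxpi hxlo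

end Aux

/-- `simplexInCube n ℓ` : an isometric copy of the regular n-simplex of edge length ℓ
with barycenter at the origin is contained in the cube [-1/2, 1/2]ⁿ. -/
def simplexInCube (n : ℕ) (ℓ : ℝ) : Prop :=
  ∃ p : Fin (n + 1) → EuclideanSpace ℝ (Fin n),
    (∀ i j, i ≠ j → dist (p i) (p j) = ℓ) ∧ (∑ i, p i = 0) ∧
    ∀ i k, |p i k| ≤ 1 / 2

/-- `f0 n` : the largest edge length of a regular n-simplex with barycenter at the
origin contained in the unit cube. -/
noncomputable def f0 (n : ℕ) : ℝ := sSup {ℓ : ℝ | simplexInCube n ℓ}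

/-- If n+1 ≡ 2 (mod 4), then f₀(n) ≥ √(n+1)/(2 cos(π/(2(n+1)))). -/
theorem stmt7 (n : ℕ) (hn : (n + 1) % 4 = 2) :
    f0 n ≥ Real.sqrt (n + 1) / (2 * Real.cos (Real.pi / (2 * (n + 1)))) := by
  have hn1 : 1 ≤ n := by omega
  have hnR : (0:ℝ) < (n:ℝ) + 1 := by positivity
  set α : ℝ := π / (2 * ((n:ℝ) + 1)) with hα
  have hαpos : 0 < α := by rw [hα]; positivity
  have hαlt : α < π / 2 := by
    rw [hα]
    rw [div_lt_div_iff₀ (by positivity) (by norm_num)]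
    have h1n : (1:ℝ) ≤ n := by exact_mod_cast hn1
    nlinarith [Real.pi_pos]
  have hcospos : 0 < Real.cos α :=
    Real.cos_pos_of_mem_Ioo ⟨by linarith [Real.pi_pos], hαlt⟩
  set c : ℝ := 1 / (2 * Real.cos α) with hc
  have hcpos : 0 < c := by rw [hc]; positivity
  -- the construction
  set p : Fin (n+1) → EuclideanSpace ℝ (Fin n) :=
    fun j => WithLp.toLp 2 (fun k : Fin n =>
      Real.cos (2*π*(j:ℕ)*(k+1)/(n+1) + π/4) * c) with hp
  have happly : ∀ (j : Fin (n+1)) (k : Fin n),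
      p j k = Real.cos (2*π*(j:ℕ)*(k+1)/(n+1) + π/4) * c := fun j k => rfl
  have hmem : simplexInCube n (Real.sqrt ((n:ℝ) + 1) / (2 * Real.cos α)) := by
    refine ⟨p, ?_, ?_, ?_⟩
    · -- distances
      intro i j hij
      rw [EuclideanSpace.dist_eq]
      have hterm : ∀ k : Fin n, dist (p i k) (p j k) ^ 2
          = (Real.cos (2*π*(i:ℕ)*(k+1)/(n+1) + π/4)
            - Real.cos (2*π*(j:ℕ)*(k+1)/(n+1) + π/4))^2 * c^2 := by
        intro k
        rw [Real.dist_eq, sq_abs, happly, happly]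
        ring
      rw [Finset.sum_congr rfl fun k _ => hterm k, ← Finset.sum_mul,
        dist_sum' n i j hij]
      rw [Real.sqrt_mul (by positivity), Real.sqrt_sq hcpos.le, hc]
      rw [mul_one_div]
    · -- barycenter
      have : ∀ k : Fin n, (∑ i, p i) k = 0 := by
        intro k
        rw [WithLp.ofLp_sum, Finset.sum_apply]
        have h1 : ∑ i : Fin (n+1), p i k
            = (∑ i : Fin (n+1), Real.cos (2*π*(i:ℕ)*(k+1)/(n+1) + π/4)) * c := by
          rw [Finset.sum_mul]
        rw [h1]
        have h2 : ∑ i : Fin (n+1), Real.cos (2*π*(i:ℕ)*(k+1)/(n+1) + π/4)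
            = ∑ i ∈ Finset.range (n+1),
                Real.cos (2 * π * (((k:ℕ)+1 : ℤ)) * i / ((n+1:ℕ)) + π/4) := by
          rw [← Fin.sum_univ_eq_sum_range (fun i =>
            Real.cos (2 * π * (((k:ℕ)+1 : ℤ)) * i / ((n+1:ℕ)) + π/4)) (n+1)]
          refine Finset.sum_congr rfl fun i _ => ?_
          congr 1
          push_cast
          ring
        rw [h2]
        have ht : ¬ (((n+1:ℕ)):ℤ) ∣ (((k:ℕ)+1 : ℤ)) := by
          have := not_dvd_helper' n (((k:ℕ)+1 : ℤ)) (by omega)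
            (by omega)
          intro hcon
          exact this (by exact_mod_cast hcon)
        rw [sum_cos_zero' (n+1) (Nat.succ_pos n) (((k:ℕ)+1 : ℤ)) ht (π/4)]
        ring
      ext k
      exact this k
    · -- coordinates
      intro j k
      rw [happly, abs_mul, abs_of_pos hcpos]
      have hb := coord_bound' (n+1) hn (j:ℕ) ((k:ℕ)+1)
      have hb' : |Real.cos (2*π*(j:ℕ)*(k+1)/(n+1) + π/4)| ≤ Real.cos α := by
        have heq : 2*π*((j:ℕ):ℝ)*(((k:ℕ)+1:ℕ))/((n+1:ℕ)) + π/4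
            = 2*π*(j:ℕ)*((k:Fin n)+1)/(n+1) + π/4 := by push_cast; ring
        have hα2 : π/(2*((n+1:ℕ):ℝ)) = α := by rw [hα]; push_cast; ring_nf
        rw [heq, hα2] at hb
        exact hb
      calc |Real.cos (2*π*(j:ℕ)*(k+1)/(n+1) + π/4)| * c
          ≤ Real.cos α * c := by
            exact mul_le_mul_of_nonneg_right hb' hcpos.le
        _ = 1/2 := by rw [hc]; field_simp
  -- bounded above
  have hbdd : BddAbove {ℓ : ℝ | simplexInCube n ℓ} := by
    refine ⟨Real.sqrt n, ?_⟩
    rintro ℓ' ⟨q, hdist, _, hcube⟩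
    have h01 : (⟨0, by omega⟩ : Fin (n+1)) ≠ ⟨1, by omega⟩ := by
      intro h
      simpa using congrArg Fin.val h
    have hℓ' : ℓ' = dist (q ⟨0, by omega⟩) (q ⟨1, by omega⟩) :=
      (hdist _ _ h01).symm
    rw [hℓ', EuclideanSpace.dist_eq]
    have hle : ∑ k : Fin n, dist (q ⟨0, by omega⟩ k) (q ⟨1, by omega⟩ k) ^ 2
        ≤ ∑ k : Fin n, 1 := by
      refine Finset.sum_le_sum fun k _ => ?_
      have h1 : dist (q ⟨0, by omega⟩ k) (q ⟨1, by omega⟩ k) ≤ 1 := by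
        rw [Real.dist_eq]
        have := hcube ⟨0, by omega⟩ k
        have := hcube ⟨1, by omega⟩ k
        calc |q ⟨0, by omega⟩ k - q ⟨1, by omega⟩ k|
            ≤ |q ⟨0, by omega⟩ k| + |q ⟨1, by omega⟩ k| := abs_sub _ _
          _ ≤ 1/2 + 1/2 := by gcongr <;> assumption
          _ = 1 := by norm_num
      calc dist (q ⟨0, by omega⟩ k) (q ⟨1, by omega⟩ k) ^ 2
          ≤ 1^2 := by exact pow_le_pow_left₀ dist_nonneg h1 2
        _ = 1 := one_pow 2
    calc Real.sqrt (∑ k : Fin n, dist (q ⟨0, by omega⟩ k) (q ⟨1, by omega⟩ k) ^ 2)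
        ≤ Real.sqrt (∑ k : Fin n, (1:ℝ)) := Real.sqrt_le_sqrt hle
      _ = Real.sqrt n := by simp [Finset.card_univ]
  -- conclude
  have hgoal : Real.sqrt ((n:ℝ) + 1) / (2 * Real.cos α) ≤ f0 n :=
    le_csSup hbdd hmem
  exact hgoal
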